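/- Integrality of renormalized vertex weights: let (a,b,c) be an admissible triple of half-integers and let u,v,t be half-integers with |u| ≤ a, |v| ≤ b, |t| ≤ c, u−a, v−b, t−c ∈ ℤ and u+v+t = 0. Then the renormalized coefficient NW^{a,b,c}_{u,v,t} := W^{a,b,c}_{u,v,t} / ([a+b−c]! [b+c−a]! [c+a−b]!) satisfies i^{a+b+c} · NW^{a,b,c}_{u,v,t} ∈ ℤ[q^{1/2}, q^{−1/2}], i.e. it is a Laurent polynomial in q^{1/2} with integer coefficients. -/

import Mathlib

noncomputable section
open scoped Classical

namespace QSpin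

/-- The ambient field: rational functions over `ℂ` (which contains `ℚ(i)`),
in a variable `X` which represents the formal fourth root `q^(1/4)`. -/
abbrev K : Type := RatFunc ℂ

/-- `X` represents `q^(1/4)`. -/
def X : K := RatFunc.X

/-- The quantum variable `q = X^4`. -/
def q : K := X ^ 4

/-- `i = √-1`, as a constant of `K`. -/
def ii : K := RatFunc.C Complex.I

/-- `q` raised to a rational power `r` (meaningful whenever `4 * r ∈ ℤ`). -/
def qpow (r : ℚ) : K := X ^ (4 * r).num

/-- Half of an integer, as a rational number: a half-integer is encoded by its double. -/
def hf (n : ℤ) : ℚ := (n : ℚ) / 2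

/-- Integer powers of `i`. -/
def ipow (n : ℤ) : K := ii ^ n

/-- Integer powers of `-1`. -/
def m1pow (n : ℤ) : K := (-1 : K) ^ n

/-- The quantum integer `[n] = (q^n - q^(-n))/(q - q⁻¹)`. -/
def qint (n : ℤ) : K := (q ^ n - q ^ (-n)) / (q - q⁻¹)

/-- The quantum factorial `[n]!`. -/
def qfact (n : ℕ) : K := ∏ j ∈ Finset.range n, qint (j + 1)

/-- The quantum factorial of an integer (zero for negative arguments). -/
def qfactz (n : ℤ) : K := if 0 ≤ n then qfact n.toNat else 0

/-- The quantum binomial `[n choose k]`, vanishing unless `0 ≤ k ≤ n`. -/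
def qbin (n k : ℤ) : K :=
  if 0 ≤ k ∧ k ≤ n then qfactz n / (qfactz k * qfactz (n - k)) else 0

/-- Admissibility of a triple of half-integers (encoded by their doubles):
all nonnegative, total sum an integer (i.e. the sum of the doubles is even), and
the triangular inequalities hold. -/
def Adm (a b c : ℤ) : Prop :=
  0 ≤ a ∧ 0 ≤ b ∧ 0 ≤ c ∧ 2 ∣ (a + b + c) ∧ c ≤ a + b ∧ a ≤ b + c ∧ b ≤ c + a

/-- The quantum Clebsch-Gordan coefficient `C^{a,b,c}_{u,v,t}`; all six half-integer
parameters are encoded by their doubles. -/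
def CG (a b c u v t : ℤ) : K :=
  if u + v = t then
    ipow ((c - a - b) / 2) * m1pow ((b - v) / 2 - (c - t) / 2) *
      qpow ((hf b - hf v) * (hf b + hf v + 1) / 2 - (hf a - hf u) * (hf a + hf u + 1) / 2) *
      (qfactz ((a + b - c) / 2) * qfactz ((b + c - a) / 2) * qfactz ((c + a - b) / 2) /
        qfactz c) *
      ∑ z ∈ Finset.range (((c - t) / 2).toNat + 1),
        m1pow z *
          qpow (((z : ℚ) - (((c - t) / 2 - (z : ℤ) : ℤ) : ℚ)) * (hf c + hf t + 1) / 2) *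
          qbin ((a + u) / 2 + z) ((a + c - b) / 2) *
          qbin ((b + v) / 2 + ((c - t) / 2 - (z : ℤ))) ((b + c - a) / 2) *
          qbin ((c - t) / 2) z
  else 0

/-- The coefficient `W^{a,b,c}_{u,v,t} = C^{a,b,c}_{u,v,-t} · i^{-2t} q^{-t} · [2c]!`. -/
def W (a b c u v t : ℤ) : K := CG a b c u v (-t) * ipow (-t) * qpow (-(hf t)) * qfactz c

/-- The coefficient `P^{a,b,c}_{u,v,t} = C^{a,c,b}_{-u,t,v} · i^{2u} q^{u} / [2a]!`. -/
def Pc (a b c u v t : ℤ) : K := CG a c b (-u) t v * ipow u * qpow (hf u) / qfactz a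

/-- The coefficient `M^{a,b,c}_{u,v,t} = P^{a,b,c}_{u,v,-t} · i^{-2t} q^{-t} / [2c]!`. -/
def M (a b c u v t : ℤ) : K := Pc a b c u v (-t) * ipow (-t) * qpow (-(hf t)) / qfactz c


/-- The renormalized vertex coefficient
`NW^{a,b,c}_{u,v,t} = W^{a,b,c}_{u,v,t} / ([a+b−c]! [b+c−a]! [c+a−b]!)`. -/
def NW (a b c u v t : ℤ) : K :=
  W a b c u v t /
    (qfactz ((a + b - c) / 2) * qfactz ((b + c - a) / 2) * qfactz ((c + a - b) / 2))

/-- The subring `ℤ[q^{1/2}, q^{-1/2}]` of `K` (recall `X = q^{1/4}`). -/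
def ZLaurentHalf : Subring K := Subring.closure {X ^ 2, (X ^ 2)⁻¹}

-- basic nonvanishing
lemma X_ne_zero : X ≠ 0 := RatFunc.X_ne_zero

lemma Xpow_ne_one {m : ℕ} (hm : m ≠ 0) : (X : K) ^ m ≠ 1 := by
  intro hEq
  have h1 : (algebraMap (Polynomial ℂ) K) (Polynomial.X ^ m) =
      (algebraMap (Polynomial ℂ) K) 1 := by
    simpa [X, RatFunc.algebraMap_X, map_pow] using hEq
  have h2 : (Polynomial.X ^ m : Polynomial ℂ) = 1 :=
    RatFunc.algebraMap_injective ℂ h1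
  have := congrArg Polynomial.natDegree h2
  simp [Polynomial.natDegree_X_pow] at this
  exact hm this

lemma Xzpow_ne_one {m : ℤ} (hm : 0 < m) : (X : K) ^ m ≠ 1 := by
  lift m to ℕ using hm.le with m' hm'
  rw [zpow_natCast]
  exact Xpow_ne_one (by exact_mod_cast hm.ne')

lemma q_ne_zero : q ≠ 0 := pow_ne_zero _ X_ne_zero

lemma q_zpow_eq (n : ℤ) : q ^ n = X ^ (4 * n) := by
  rw [q, ← zpow_natCast X 4, ← zpow_mul]
  norm_num

lemma q_zpow_ne_one {n : ℤ} (hn : 0 < n) : q ^ n ≠ 1 := by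
  rw [q_zpow_eq]
  exact Xzpow_ne_one (by omega)

lemma qden_ne_zero : q - q⁻¹ ≠ 0 := by
  intro hEq
  have h1 : q = q⁻¹ := sub_eq_zero.mp hEq
  have h2 : q ^ (2:ℤ) = 1 := by
    rw [show (2:ℤ) = 1 + 1 by norm_num, zpow_add₀ q_ne_zero, zpow_one]
    nth_rewrite 2 [h1]
    exact mul_inv_cancel₀ q_ne_zero
  exact q_zpow_ne_one (by norm_num) h2

lemma qnum_ne_zero {n : ℤ} (hn : 1 ≤ n) : q ^ n - q ^ (-n) ≠ 0 := by
  intro hEq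
  have h1 : q ^ n = q ^ (-n) := sub_eq_zero.mp hEq
  have h2 : q ^ (2*n) = 1 := by
    rw [show 2*n = n + n by ring, zpow_add₀ q_ne_zero]
    nth_rewrite 2 [h1]
    rw [← zpow_add₀ q_ne_zero]
    simp
  exact q_zpow_ne_one (by omega) h2

lemma qint_ne_zero {n : ℤ} (hn : 1 ≤ n) : qint n ≠ 0 :=
  div_ne_zero (qnum_ne_zero hn) qden_ne_zero

lemma qfact_ne_zero (n : ℕ) : qfact n ≠ 0 := by
  rw [qfact]
  apply Finset.prod_ne_zero_iff.mpr
  intro j _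
  exact qint_ne_zero (by omega)

lemma qfactz_natCast (n : ℕ) : qfactz (n : ℤ) = qfact n := by
  simp [qfactz]

lemma qfactz_ne_zero {n : ℤ} (h : 0 ≤ n) : qfactz n ≠ 0 := by
  rw [qfactz, if_pos h]; exact qfact_ne_zero _

lemma qfact_succ (n : ℕ) : qfact (n + 1) = qint ((n:ℤ) + 1) * qfact n := by
  rw [qfact, qfact, Finset.prod_range_succ, mul_comm]

-- splitting identity for quantum integers
lemma qint_split (m k : ℤ) : qint m = q ^ k * qint (m - k) + q ^ (k - m) * qint k := by
  rw [qint, qint, qint, ← mul_div_assoc, ← mul_div_assoc, ← add_div]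
  congr 1
  rw [mul_sub, mul_sub, ← zpow_add₀ q_ne_zero, ← zpow_add₀ q_ne_zero,
    ← zpow_add₀ q_ne_zero, ← zpow_add₀ q_ne_zero,
    show k + (m - k) = m by ring, show k + -(m - k) = 2*k - m by ring,
    show k - m + k = 2*k - m by ring, show k - m + -k = -m by ring]
  ring

-- membership lemmas for ZLaurentHalf
lemma X2_mem : (X ^ 2 : K) ∈ ZLaurentHalf :=
  Subring.subset_closure (by left; rfl)

lemma X2_inv_mem : ((X ^ 2)⁻¹ : K) ∈ ZLaurentHalf :=
  Subring.subset_closure (by right; rfl)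

lemma X2_zpow_mem (k : ℤ) : ((X ^ 2 : K)) ^ k ∈ ZLaurentHalf := by
  rcases le_or_gt 0 k with hk | hk
  · lift k to ℕ using hk
    rw [zpow_natCast]
    exact pow_mem X2_mem _
  · obtain ⟨m, hm⟩ : ∃ m : ℕ, k = -(m:ℤ) := ⟨(-k).toNat, by omega⟩
    subst hm
    rw [zpow_neg, zpow_natCast, ← inv_pow]
    exact pow_mem X2_inv_mem _

lemma X_zpow_mem {m : ℤ} (h : Even m) : (X : K) ^ m ∈ ZLaurentHalf := by
  obtain ⟨k, hk⟩ := h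
  have h1 : (X : K) ^ m = ((X ^ 2 : K)) ^ k := by
    rw [show m = 2 * k by omega, zpow_mul, show ((2:ℤ)) = ((2:ℕ):ℤ) by norm_num,
      zpow_natCast]
  rw [h1]
  exact X2_zpow_mem k

lemma q_zpow_mem (k : ℤ) : q ^ k ∈ ZLaurentHalf := by
  rw [q_zpow_eq]
  exact X_zpow_mem ⟨2 * k, by ring⟩

lemma m1pow_mem (n : ℤ) : m1pow n ∈ ZLaurentHalf := by
  rcases Int.even_or_odd n with h | h
  · rw [m1pow, h.neg_one_zpow]; exact one_mem _
  · rw [m1pow, h.neg_one_zpow]; exact neg_mem (one_mem _)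

lemma ii_sq : ii ^ 2 = (-1 : K) := by
  rw [ii, ← map_pow, sq, Complex.I_mul_I, map_neg, map_one]

lemma ii_ne_zero : ii ≠ 0 := by
  intro h
  have h2 := ii_sq
  rw [h] at h2
  simp at h2

lemma ipow_add (m n : ℤ) : ipow m * ipow n = ipow (m + n) :=
  (zpow_add₀ ii_ne_zero _ _).symm

lemma ipow_even_mem {n : ℤ} (h : Even n) : ipow n ∈ ZLaurentHalf := by
  obtain ⟨k, hk⟩ := h
  have h1 : ipow n = (-1 : K) ^ k := by
    rw [ipow, show n = 2 * k by omega, zpow_mul,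
      show ((2:ℤ)) = ((2:ℕ):ℤ) by norm_num, zpow_natCast, ii_sq]
  rw [h1]
  exact m1pow_mem k

-- qpow helpers
lemma qpow_eq {r : ℚ} {m : ℤ} (h : 4 * r = (m : ℚ)) : qpow r = X ^ m := by
  rw [qpow, h, Rat.num_intCast]

lemma qpow_mem {r : ℚ} {m : ℤ} (h : 4 * r = (m : ℚ)) (hm : Even m) :
    qpow r ∈ ZLaurentHalf := by
  rw [qpow_eq h]
  exact X_zpow_mem hm

-- qbin facts
lemma qbin_nat (n k : ℕ) (hk : k ≤ n) :
    qbin (n : ℤ) (k : ℤ) = qfact n / (qfact k * qfact (n - k)) := by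
  rw [qbin, if_pos ⟨by positivity, by exact_mod_cast hk⟩]
  rw [show (n : ℤ) - (k : ℤ) = ((n - k : ℕ) : ℤ) by omega]
  rw [qfactz_natCast, qfactz_natCast, qfactz_natCast]

lemma qfact_zero : qfact 0 = 1 := by simp [qfact]

lemma qbin_diag (n : ℕ) : qbin (n : ℤ) (n : ℤ) = 1 := by
  rw [qbin_nat n n le_rfl, Nat.sub_self, qfact_zero, mul_one]
  exact div_self (qfact_ne_zero n)

lemma qbin_zero (n : ℕ) : qbin (n : ℤ) 0 = 1 := by
  rw [show (0:ℤ) = ((0:ℕ):ℤ) by norm_num, qbin_nat n 0 (by omega)]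
  rw [qfact_zero, Nat.sub_zero, one_mul]
  exact div_self (qfact_ne_zero n)

lemma qbin_of_gt {n k : ℕ} (h : n < k) : qbin (n : ℤ) (k : ℤ) = 0 := by
  rw [qbin, if_neg]
  rintro ⟨-, h2⟩
  exact absurd (by exact_mod_cast h2 : k ≤ n) (by omega)

lemma qbin_pascal (n k : ℕ) (hk : k < n) :
    qbin ((n:ℤ) + 1) ((k:ℤ) + 1) =
      q ^ ((k:ℤ) + 1) * qbin (n:ℤ) ((k:ℤ) + 1) + q ^ ((k:ℤ) - n) * qbin (n:ℤ) (k:ℤ) := by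
  have c1 : ((n:ℤ) + 1) = ((n + 1 : ℕ) : ℤ) := by omega
  have c2 : ((k:ℤ) + 1) = ((k + 1 : ℕ) : ℤ) := by omega
  rw [c1, c2, qbin_nat (n+1) (k+1) (by omega), qbin_nat n (k+1) (by omega),
    qbin_nat n k hk.le]
  have e1 : qfact (n + 1) = qint ((n:ℤ) + 1) * qfact n := qfact_succ n
  have e2 : n + 1 - (k + 1) = n - k := by omega
  have e3 : qfact (n - k) = qint ((n:ℤ) - k) * qfact (n - k - 1) := by
    rw [show n - k = (n - k - 1) + 1 by omega, qfact_succ]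
    congr 2
    omega
  have e4 : qfact (k + 1) = qint ((k:ℤ) + 1) * qfact k := qfact_succ k
  have e5 : n - (k + 1) = n - k - 1 := by omega
  rw [e2, e1, e3, e4, e5]
  have split := qint_split ((n:ℤ) + 1) ((k:ℤ) + 1)
  rw [show (n:ℤ) + 1 - ((k:ℤ) + 1) = (n:ℤ) - k by ring,
    show (k:ℤ) + 1 - ((n:ℤ) + 1) = (k:ℤ) - n by ring] at split
  rw [split]
  have h1 := qint_ne_zero (show (1:ℤ) ≤ (n:ℤ) - k by omega)
  have h2 := qint_ne_zero (show (1:ℤ) ≤ (k:ℤ) + 1 by omega)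
  have h3 := qfact_ne_zero k
  have h4 := qfact_ne_zero (n - k - 1)
  field_simp
  push_cast
  ring

lemma qbin_nat_mem (n : ℕ) : ∀ k : ℕ, qbin (n : ℤ) (k : ℤ) ∈ ZLaurentHalf := by
  induction n with
  | zero =>
    intro k
    cases k with
    | zero =>
      have h0 := qbin_zero 0
      simp only [Nat.cast_zero] at h0 ⊢
      rw [h0]; exact one_mem _
    | succ k => rw [qbin_of_gt (by omega)]; exact zero_mem _
  | succ n ih =>
    intro k
    cases k with
    | zero =>
      have h0 := qbin_zero (n+1)
      simp only [Nat.cast_zero] at h0 ⊢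
      rw [h0]; exact one_mem _
    | succ k =>
      rcases lt_trichotomy k n with h | h | h
      · have : qbin ((n+1:ℕ):ℤ) ((k+1:ℕ):ℤ) =
            q ^ ((k:ℤ) + 1) * qbin (n:ℤ) ((k:ℤ) + 1) + q ^ ((k:ℤ) - n) * qbin (n:ℤ) (k:ℤ) := by
          rw [show ((n+1:ℕ):ℤ) = (n:ℤ) + 1 by omega, show ((k+1:ℕ):ℤ) = (k:ℤ) + 1 by omega]
          exact qbin_pascal n k h
        rw [this]
        have ihk1 : qbin (n:ℤ) ((k:ℤ) + 1) ∈ ZLaurentHalf := by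
          rw [show (k:ℤ) + 1 = ((k+1:ℕ):ℤ) by omega]; exact ih (k+1)
        exact add_mem (mul_mem (q_zpow_mem _) ihk1) (mul_mem (q_zpow_mem _) (ih k))
      · subst h
        rw [show ((k+1:ℕ):ℤ) = ((k+1:ℕ):ℤ) from rfl, qbin_diag]
        exact one_mem _
      · rw [qbin_of_gt (by omega)]
        exact zero_mem _

lemma qbin_mem (n k : ℤ) : qbin n k ∈ ZLaurentHalf := by
  by_cases h : 0 ≤ k ∧ k ≤ n
  · lift n to ℕ using le_trans h.1 h.2
    lift k to ℕ using h.1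
    exact qbin_nat_mem n k
  · rw [qbin, if_neg h]
    exact zero_mem _

lemma cancelNW (A S F3 Fc I Q : K) (hF3 : F3 ≠ 0) (hFc : Fc ≠ 0) :
    A * (F3 / Fc) * S * I * Q * Fc / F3 = A * S * I * Q := by
  field_simp

lemma assemble (P Q T e : ℤ) (r1 rt : ℚ) (S : K)
    (hI : ipow P * ipow Q * ipow T ∈ ZLaurentHalf)
    (hr1 : qpow r1 ∈ ZLaurentHalf) (hrt : qpow rt ∈ ZLaurentHalf)
    (hS : S ∈ ZLaurentHalf) :
    ipow P * (ipow Q * m1pow e * qpow r1 * S * ipow T * qpow rt) ∈ ZLaurentHalf := by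
  have h1 : ipow P * (ipow Q * m1pow e * qpow r1 * S * ipow T * qpow rt)
      = (ipow P * ipow Q * ipow T) * m1pow e * qpow r1 * qpow rt * S := by ring
  rw [h1]
  exact mul_mem (mul_mem (mul_mem (mul_mem hI (m1pow_mem e)) hr1) hrt) hS


/-- Integrality of renormalized vertex weights: for an admissible
triple `(a,b,c)` and weights `u,v,t` with `|u| ≤ a`, `|v| ≤ b`, `|t| ≤ c`,
`u−a, v−b, t−c ∈ ℤ` and `u+v+t = 0`, the element `i^{a+b+c} · NW^{a,b,c}_{u,v,t}`
is a Laurent polynomial in `q^{1/2}` with integer coefficients.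
(Half-integers are encoded by their doubles.) -/
theorem NW_integral (a b c u v t : ℤ) (h : Adm a b c)
    (hu : |u| ≤ a) (hv : |v| ≤ b) (ht : |t| ≤ c)
    (h1 : 2 ∣ (a - u)) (h2 : 2 ∣ (b - v)) (h3 : 2 ∣ (c - t))
    (hs : u + v + t = 0) :
    ipow ((a + b + c) / 2) * NW a b c u v t ∈ ZLaurentHalf := by
  obtain ⟨ha, hb, hc, hpar, hab, hbc, hca⟩ := h
  obtain ⟨au, hau⟩ := h1
  obtain ⟨bv, hbv⟩ := h2
  obtain ⟨ct, hct⟩ := h3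
  have hua : |u| ≤ a := hu
  have hcond : u + v = -t := by omega
  have hF3 : qfactz ((a + b - c) / 2) * qfactz ((b + c - a) / 2) *
      qfactz ((c + a - b) / 2) ≠ 0 :=
    mul_ne_zero (mul_ne_zero (qfactz_ne_zero (by omega)) (qfactz_ne_zero (by omega)))
      (qfactz_ne_zero (by omega))
  have hFc : qfactz c ≠ 0 := qfactz_ne_zero hc
  simp only [NW, W, CG]
  rw [if_pos hcond, cancelNW _ _ _ _ _ _ hF3 hFc]
  have hI : ipow ((a + b + c) / 2) * ipow ((c - a - b) / 2) * ipow (-t) ∈ ZLaurentHalf := by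
    rw [ipow_add, ipow_add, show (a + b + c) / 2 + (c - a - b) / 2 + -t = c - t by omega]
    exact ipow_even_mem ⟨ct, by omega⟩
  have hQ1 : qpow ((hf b - hf v) * (hf b + hf v + 1) / 2 -
      (hf a - hf u) * (hf a + hf u + 1) / 2) ∈ ZLaurentHalf := by
    apply qpow_mem (m := bv * (b + v + 2) - au * (a + u + 2))
    · have haq : (a:ℚ) = 2*au + u := by exact_mod_cast (by omega : a = 2*au + u)
      have hbq : (b:ℚ) = 2*bv + v := by exact_mod_cast (by omega : b = 2*bv + v)
      simp only [hf]
      push_cast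
      rw [haq, hbq]
      ring
    · refine ⟨bv*(bv + v + 1) - au*(au + u + 1), ?_⟩
      rw [show b + v + 2 = 2*(bv + v + 1) by omega, show a + u + 2 = 2*(au + u + 1) by omega]
      ring
  have hQt : qpow (-(hf t)) ∈ ZLaurentHalf := by
    apply qpow_mem (m := -2*t)
    · simp only [hf]; push_cast; ring
    · exact ⟨-t, by ring⟩
  refine assemble _ _ _ _ _ _ _ hI hQ1 hQt ?_
  refine sum_mem ?_
  intro z hz
  refine mul_mem (mul_mem (mul_mem (mul_mem (m1pow_mem _) ?_) (qbin_mem _ _))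
    (qbin_mem _ _)) (qbin_mem _ _)
  apply qpow_mem (m := 2*(2*(z:ℤ) - (t + ct))*(ct + 1))
  · rw [show (c - -t)/2 = t + ct by omega]
    simp only [hf]
    have hcq : (c:ℚ) = 2*ct + t := by exact_mod_cast (by omega : c = 2*ct + t)
    push_cast
    rw [hcq]
    ring
  · exact ⟨(2*(z:ℤ) - (t+ct))*(ct+1), by ring⟩


end QSpin
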